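/- Let N ≥ 1, let A ∈ ℝ^{N×N} be a non-singular M-matrix and let p < 1. If x ∈ ℝ^N with x > 0 componentwise satisfies A x ≤ x^p componentwise (x is a subsolution) and y ∈ ℝ^N with y > 0 componentwise satisfies A y ≥ y^p componentwise (y is a supersolution), then x ≤ y componentwise. In particular, the equation A x = x^p has at most one solution x with x > 0 componentwise. -/
import Mathlib


/-- The spectral radius of a real square matrix, computed via its complex spectrum. -/
noncomputable def specRad {N : ℕ} (B : Matrix (Fin N) (Fin N) ℝ) : ENNReal :=
  spectralRadius ℂ (B.map Complex.ofReal)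

/-- A real square matrix is a Z-matrix if all its off-diagonal entries are nonpositive. -/
def IsZMatrix {N : ℕ} (A : Matrix (Fin N) (Fin N) ℝ) : Prop :=
  ∀ i j, i ≠ j → A i j ≤ 0

/-- A real square matrix is a non-singular M-matrix if it is a Z-matrix and can be written
as `s • 1 - B` with `B` entrywise nonnegative and `s` strictly greater than the spectral
radius of `B`. -/
def IsNonsingMMatrix {N : ℕ} (A : Matrix (Fin N) (Fin N) ℝ) : Prop :=
  IsZMatrix A ∧
    ∃ (s : ℝ) (B : Matrix (Fin N) (Fin N) ℝ),
      (∀ i j, 0 ≤ B i j) ∧ A = s • (1 : Matrix (Fin N) (Fin N) ℝ) - B ∧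
      specRad B < ENNReal.ofReal s

lemma key_comparison {N : ℕ} (hN : 1 ≤ N) (s : ℝ) (B : Matrix (Fin N) (Fin N) ℝ)
    (hB : ∀ i j, 0 ≤ B i j) (p : ℝ) (hp : p < 1) (x y : Fin N → ℝ)
    (hx : ∀ i, 0 < x i) (hy : ∀ i, 0 < y i)
    (hsub : ∀ i, (s • (1 : Matrix (Fin N) (Fin N) ℝ) - B).mulVec x i ≤ x i ^ p)
    (hsup : ∀ i, y i ^ p ≤ (s • (1 : Matrix (Fin N) (Fin N) ℝ) - B).mulVec y i) :
    ∀ i, x i ≤ y i := by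
  haveI : Nonempty (Fin N) := Fin.pos_iff_nonempty.mp hN
  have hne : (Finset.univ : Finset (Fin N)).Nonempty := Finset.univ_nonempty
  set t := Finset.univ.sup' hne (fun i => x i / y i) with ht
  obtain ⟨i₀, -, hi₀⟩ := Finset.exists_mem_eq_sup' hne (fun i => x i / y i)
  have ht0 : 0 < t := by rw [ht, hi₀]; exact div_pos (hx i₀) (hy i₀)
  have hle : ∀ j, x j ≤ t * y j := by
    intro j
    have h := Finset.le_sup' (fun i => x i / y i) (Finset.mem_univ j)
    rw [← ht] at h
    have := mul_le_mul_of_nonneg_right h (hy j).le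
    rwa [div_mul_cancel₀ _ (hy j).ne'] at this
  have hxi : x i₀ = t * y i₀ := by
    rw [ht, hi₀, div_mul_cancel₀ _ (hy i₀).ne']
  have hmv : ∀ z : Fin N → ℝ, ∀ i, (s • (1 : Matrix (Fin N) (Fin N) ℝ) - B).mulVec z i
      = s * z i - Finset.univ.sum (fun j => B i j * z j) := by
    intro z i
    simp only [Matrix.mulVec, dotProduct, Matrix.sub_apply, Matrix.smul_apply,
      Matrix.one_apply, smul_eq_mul, sub_mul, Finset.sum_sub_distrib, mul_ite, mul_one,
      mul_zero, ite_mul, zero_mul, Finset.sum_ite_eq, Finset.mem_univ, if_true]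
  have h1 : t * (y i₀ ^ p) ≤ x i₀ ^ p := by
    have hsupi := hsup i₀
    have hsubi := hsub i₀
    rw [hmv] at hsupi hsubi
    have hBx : Finset.univ.sum (fun j => B i₀ j * x j)
        ≤ t * Finset.univ.sum (fun j => B i₀ j * y j) := by
      rw [Finset.mul_sum]
      refine Finset.sum_le_sum fun j _ => ?_
      calc B i₀ j * x j ≤ B i₀ j * (t * y j) :=
            mul_le_mul_of_nonneg_left (hle j) (hB i₀ j)
        _ = t * (B i₀ j * y j) := by ring
    calc t * (y i₀ ^ p)
        ≤ t * (s * y i₀ - Finset.univ.sum fun j => B i₀ j * y j) :=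
          mul_le_mul_of_nonneg_left hsupi ht0.le
      _ = s * (t * y i₀) - t * Finset.univ.sum (fun j => B i₀ j * y j) := by ring
      _ ≤ s * x i₀ - Finset.univ.sum (fun j => B i₀ j * x j) := by
          rw [hxi]; linarith
      _ ≤ x i₀ ^ p := hsubi
  have h2 : x i₀ ^ p = t ^ p * y i₀ ^ p := by
    rw [hxi, Real.mul_rpow ht0.le (hy i₀).le]
  have ht1 : t ≤ 1 := by
    by_contra h
    push_neg at h
    have htp : t ^ p < t := by
      calc t ^ p < t ^ (1 : ℝ) := Real.rpow_lt_rpow_of_exponent_lt h hp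
        _ = t := Real.rpow_one t
    have hyp : 0 < y i₀ ^ p := Real.rpow_pos_of_pos (hy i₀) p
    nlinarith
  intro j
  calc x j ≤ t * y j := hle j
    _ ≤ 1 * y j := mul_le_mul_of_nonneg_right ht1 (hy j).le
    _ = y j := one_mul _

/-- comparison of sub- and supersolutions of `A x = x^p` for a non-singular
M-matrix `A` and `p < 1`, and the resulting uniqueness of positive solutions. -/
theorem statement2 {N : ℕ} (hN : 1 ≤ N) (A : Matrix (Fin N) (Fin N) ℝ) (p : ℝ)
    (hp : p < 1) (hA : IsNonsingMMatrix A)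
    (x y : Fin N → ℝ) (hx : ∀ i, 0 < x i) (hy : ∀ i, 0 < y i)
    (hsub : ∀ i, A.mulVec x i ≤ x i ^ p) (hsup : ∀ i, y i ^ p ≤ A.mulVec y i) :
    (∀ i, x i ≤ y i) ∧
      ∀ x' y' : Fin N → ℝ, (∀ i, 0 < x' i) → (∀ i, 0 < y' i) →
        A.mulVec x' = (fun i => x' i ^ p) → A.mulVec y' = (fun i => y' i ^ p) →
        x' = y' := by
  obtain ⟨hZ, s, B, hB, hAB, -⟩ := hA
  subst hAB
  refine ⟨key_comparison hN s B hB p hp x y hx hy hsub hsup, ?_⟩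
  intro x' y' hx' hy' hex hey
  have hx'sub : ∀ i, (s • (1 : Matrix (Fin N) (Fin N) ℝ) - B).mulVec x' i ≤ x' i ^ p :=
    fun i => le_of_eq (congrFun hex i)
  have hx'sup : ∀ i, x' i ^ p ≤ (s • (1 : Matrix (Fin N) (Fin N) ℝ) - B).mulVec x' i :=
    fun i => ge_of_eq (congrFun hex i)
  have hy'sub : ∀ i, (s • (1 : Matrix (Fin N) (Fin N) ℝ) - B).mulVec y' i ≤ y' i ^ p :=
    fun i => le_of_eq (congrFun hey i)
  have hy'sup : ∀ i, y' i ^ p ≤ (s • (1 : Matrix (Fin N) (Fin N) ℝ) - B).mulVec y' i :=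
    fun i => ge_of_eq (congrFun hey i)
  funext i
  exact le_antisymm (key_comparison hN s B hB p hp x' y' hx' hy' hx'sub hy'sup i)
    (key_comparison hN s B hB p hp y' x' hy' hx' hy'sub hx'sup i)
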